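/- Let q be a power of a prime p, let A ∈ GL₂(F_q) with [A] ≠ [I], and let D be the order of [A] in PGL₂(F_q). Then: (i) if A is of type 1 (distinct eigenvalues in F_q), then D > 1 and D divides q−1; (ii) if A is of type 2 (equal eigenvalues in F_q), then D = p; (iii) if A is of type 3 (eigenvalues in F_{q²}∖F_q that are negatives of each other), then D = 2; (iv) if A is of type 4 (eigenvalues in F_{q²}∖F_q that are not negatives of each other), then D divides q+1 and D > 2. -/

import Mathlib

open Polynomial

noncomputable section

namespace PGLAct

variable {F : Type} [Field F]

/-- The composition `A ∘ f = ∑ aᵢ (a x + c)^i (b x + d)^{k-i}` for `A = [[a,b],[c,d]]`. -/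
def mcirc (A : Matrix (Fin 2) (Fin 2) F) (f : F[X]) : F[X] :=
  ∑ i ∈ Finset.range (f.natDegree + 1),
    C (f.coeff i) * (C (A 0 0) * X + C (A 1 0)) ^ i *
      (C (A 0 1) * X + C (A 1 1)) ^ (f.natDegree - i)

/-- The composition `[A] ∘ f`: the monic normalization of `A ∘ f`. -/
def pcirc (A : Matrix (Fin 2) (Fin 2) F) (f : F[X]) : F[X] :=
  C (mcirc A f).leadingCoeff⁻¹ * mcirc A f

/-- The subgroup of scalar matrices in `GL₂(F)`. -/
def scalarSub (F : Type) [Field F] : Subgroup (GL (Fin 2) F) :=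
  (Units.map ((Matrix.scalar (Fin 2)).toMonoidHom : F →* Matrix (Fin 2) (Fin 2) F)).range

instance scalarSub_normal (F : Type) [Field F] : (scalarSub F).Normal := by
  constructor
  intro n hn g
  obtain ⟨u, hu⟩ := hn
  refine ⟨u, ?_⟩
  ext : 1
  have hcomm : Commute ((Matrix.scalar (Fin 2)) (u : F)) (g : Matrix (Fin 2) (Fin 2) F) :=
    Matrix.scalar_commute _ (fun r' => Commute.all _ r') _
  have hval : (n : Matrix (Fin 2) (Fin 2) F) = (Matrix.scalar (Fin 2)) (u : F) := by
    rw [← hu]; rfl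
  calc ((Units.map ((Matrix.scalar (Fin 2)).toMonoidHom : F →* Matrix (Fin 2) (Fin 2) F)) u :
        GL (Fin 2) F).val
      = (Matrix.scalar (Fin 2)) (u : F) := rfl
    _ = (g : Matrix (Fin 2) (Fin 2) F) * (Matrix.scalar (Fin 2)) (u : F)
        * ((g⁻¹ : GL (Fin 2) F) : Matrix (Fin 2) (Fin 2) F) := by
        rw [← hcomm.eq, mul_assoc, ← Units.val_mul, mul_inv_cancel]
        simp
    _ = ((g * n * g⁻¹ : GL (Fin 2) F) : Matrix (Fin 2) (Fin 2) F) := by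
        simp [Units.val_mul, hval]

/-- `PGL₂(F)`, the projective general linear group. -/
def PGL2 (F : Type) [Field F] : Type := GL (Fin 2) F ⧸ scalarSub F

instance : Group (PGL2 F) := inferInstanceAs (Group (GL (Fin 2) F ⧸ scalarSub F))

/-- The natural projection `GL₂(F) → PGL₂(F)`, `A ↦ [A]`. -/
def toPGL (F : Type) [Field F] : GL (Fin 2) F →* PGL2 F := QuotientGroup.mk' (scalarSub F)

/-- The polynomial `F_{A,r} = b x^{q^r+1} - a x^{q^r} + d x - c`. -/
def FAr [Fintype F] (A : Matrix (Fin 2) (Fin 2) F) (r : ℕ) : F[X] :=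
  C (A 0 1) * X ^ (Fintype.card F ^ r + 1) - C (A 0 0) * X ^ (Fintype.card F ^ r)
    + C (A 1 1) * X - C (A 1 0)


/-- The σ-product of `A = [[a,b],[c,d]]` and `A₀ = [[a₀,b₀],[c₀,d₀]]`. -/
def sigmaProd (A A0 : Matrix (Fin 2) (Fin 2) F) : Matrix (Fin 2) (Fin 2) F :=
  !![-(A 0 1 * (A0 0 0 * A0 1 0) - A 0 0 * (A0 0 0 * A0 1 1) + A 1 1 * (A0 1 0 * A0 0 1)
        - A 1 0 * (A0 0 1 * A0 1 1)),
     A 0 1 * A0 0 0 ^ 2 - A 0 0 * (A0 0 0 * A0 0 1) + A 1 1 * (A0 0 0 * A0 0 1)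
        - A 1 0 * A0 0 1 ^ 2;
     -(A 0 1 * A0 1 0 ^ 2 - A 0 0 * (A0 1 0 * A0 1 1) + A 1 1 * (A0 1 1 * A0 1 0)
        - A 1 0 * A0 1 1 ^ 2),
     A 0 1 * (A0 0 0 * A0 1 0) - A 0 0 * (A0 1 0 * A0 0 1) + A 1 1 * (A0 1 1 * A0 0 0)
        - A 1 0 * (A0 0 1 * A0 1 1)]

end PGLAct



section Aux

open PGLAct

variable {F : Type} [Field F]

lemma scalar_eq_smul (c : F) :
    (Matrix.scalar (Fin 2)) c = c • (1 : Matrix (Fin 2) (Fin 2) F) := by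
  ext i j
  simp [Matrix.scalar_apply, Matrix.diagonal_apply, Matrix.one_apply, mul_comm]

lemma mem_scalarSub_iff (M : GL (Fin 2) F) :
    M ∈ scalarSub F ↔ ∃ c : F, (M : Matrix (Fin 2) (Fin 2) F) = c • 1 := by
  constructor
  · rintro ⟨u, rfl⟩
    exact ⟨u, scalar_eq_smul _⟩
  · rintro ⟨c, hc⟩
    have hc0 : c ≠ 0 := by
      rintro rfl
      have h1 : (M : Matrix (Fin 2) (Fin 2) F) *
          ((M⁻¹ : GL (Fin 2) F) : Matrix (Fin 2) (Fin 2) F) = 1 := by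
        rw [← Units.val_mul, mul_inv_cancel]; rfl
      rw [hc, zero_smul, zero_mul] at h1
      have := congrFun (congrFun h1 0) 0
      simp [Matrix.one_apply] at this
    refine ⟨Units.mk0 c hc0, Units.ext ?_⟩
    simp only [Units.coe_map]
    rw [hc]
    exact scalar_eq_smul c

lemma pgl_pow_eq_one_iff (A : GL (Fin 2) F) (n : ℕ) :
    toPGL F A ^ n = 1 ↔ ∃ c : F, (A : Matrix (Fin 2) (Fin 2) F) ^ n = c • 1 := by
  rw [← map_pow]
  rw [show (toPGL F (A ^ n) = 1) = (((A ^ n : GL (Fin 2) F) : GL (Fin 2) F ⧸ scalarSub F) = 1)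
      from rfl, QuotientGroup.eq_one_iff, mem_scalarSub_iff]
  simp [Units.val_pow_eq_pow_val]

lemma pgl_eq_one_iff (A : GL (Fin 2) F) :
    toPGL F A = 1 ↔ ∃ c : F, (A : Matrix (Fin 2) (Fin 2) F) = c • 1 := by
  simpa using pgl_pow_eq_one_iff A 1

lemma key_pow {K : Type} [Field K] (B : Matrix (Fin 2) (Fin 2) K) (a b : K)
    (h : B * B = (a + b) • B - (a * b) • 1) :
    ∀ n : ℕ, (a - b) • B ^ n = (a ^ n - b ^ n) • B + (a * b ^ n - b * a ^ n) • 1 := by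
  intro n
  induction n with
  | zero => simp
  | succ n ih =>
    have hstep : (a - b) • B ^ (n+1) = ((a - b) • B ^ n) * B := by
      rw [smul_mul_assoc, pow_succ]
    rw [hstep, ih, add_mul, smul_mul_assoc, smul_mul_assoc, one_mul, h]
    module

lemma smul_one_cancel {K : Type} [Field K] {B : Matrix (Fin 2) (Fin 2) K} {c : K}
    (hc : c ≠ 0) {M : Matrix (Fin 2) (Fin 2) K} (h : c • B = M) : B = c⁻¹ • M := by
  rw [← h, smul_smul, inv_mul_cancel₀ hc, one_smul]

lemma scalar_pow_iff {K : Type} [Field K] (B : Matrix (Fin 2) (Fin 2) K) (a b : K)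
    (h : B * B = (a + b) • B - (a * b) • 1) (hab : a ≠ b)
    (hB : ¬ ∃ c : K, B = c • 1) (n : ℕ) :
    (∃ c : K, B ^ n = c • 1) ↔ a ^ n = b ^ n := by
  have hab' : a - b ≠ 0 := sub_ne_zero.mpr hab
  constructor
  · rintro ⟨c, hc⟩
    by_contra hne
    have key := key_pow B a b h n
    rw [hc, smul_smul] at key
    have hBs : (a ^ n - b ^ n) • B = ((a - b) * c - (a * b ^ n - b * a ^ n)) • 1 := by
      linear_combination (norm := module) key.symm
    have : B = ((a ^ n - b ^ n)⁻¹ * ((a - b) * c - (a * b ^ n - b * a ^ n))) • 1 := by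
      have := smul_one_cancel (sub_ne_zero.mpr hne) hBs
      rwa [smul_smul] at this
    exact hB ⟨_, this⟩
  · intro he
    have key := key_pow B a b h n
    rw [he, sub_self, zero_smul, zero_add] at key
    have h2 : a * b ^ n - b * b ^ n = (a - b) * b ^ n := by ring
    rw [h2] at key
    refine ⟨b ^ n, ?_⟩
    have := smul_one_cancel hab' key
    rw [this, smul_smul]
    congr 1
    field_simp

lemma monic_two {K : Type} [Field K] (f : K[X]) (hm : f.Monic) (hdeg : f.natDegree = 2) :
    f = X ^ 2 + C (f.coeff 1) * X + C (f.coeff 0) := by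
  ext n
  match n with
  | 0 => simp
  | 1 => simp [coeff_one]
  | 2 =>
    have h2 : f.coeff 2 = 1 := by
      have := hm.coeff_natDegree
      rwa [hdeg] at this
    simp [h2, coeff_one, coeff_X]
  | (n+3) =>
    have h1 : f.coeff (n+3) = 0 := coeff_eq_zero_of_natDegree_lt (by omega)
    have h2 : ((X : K[X]) ^ 2).coeff (n+3) = 0 := by
      rw [coeff_X_pow]; simp
    simp [h1, h2, coeff_C, coeff_X]

lemma expand_two {K : Type} [Field K] (B : Matrix (Fin 2) (Fin 2) K) (x y : K) :
    (B - x • 1) * (B - y • 1) = B * B - (x + y) • B + (x * y) • 1 := by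
  rw [sub_mul, mul_sub, mul_sub]
  rw [mul_smul_comm, smul_mul_assoc, smul_mul_assoc, mul_one, one_mul, mul_smul_comm,
    smul_smul, mul_one]
  module

lemma ch_eq {K : Type} [Field K] (B : Matrix (Fin 2) (Fin 2) K) (x y : K)
    (hch : B.charpoly = (X - C x) * (X - C y)) :
    B * B = (x + y) • B - (x * y) • 1 := by
  have h := Matrix.aeval_self_charpoly B
  rw [hch] at h
  simp only [map_mul, map_sub, aeval_X, aeval_C, Algebra.algebraMap_eq_smul_one] at h
  rw [expand_two] at h
  linear_combination (norm := module) h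

lemma det_of_charpoly {K : Type} [Field K] (B : Matrix (Fin 2) (Fin 2) K) (x y : K)
    (hch : B.charpoly = (X - C x) * (X - C y)) : B.det = x * y := by
  have h := Matrix.det_eq_sign_charpoly_coeff B
  rw [hch] at h
  simp [mul_coeff_zero] at h
  rw [h]

lemma mem_range_of_pow_card {F K : Type} [Field F] [Fintype F] [Field K] [Algebra F K]
    (x : K) (hx : x ^ (Fintype.card F) = x) : ∃ a : F, algebraMap F K a = x := by
  classical
  by_contra hc
  push_neg at hc
  set q := Fintype.card F with hq
  have hq1 : 1 < q := Fintype.one_lt_card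
  set g : K[X] := X ^ q - X with hg
  have hg0 : g ≠ 0 := FiniteField.X_pow_card_sub_X_ne_zero K hq1
  have hgd : g.natDegree = q := FiniteField.X_pow_card_sub_X_natDegree_eq K hq1
  have hxmem : x ∉ Finset.univ.image (algebraMap F K) := by
    simp only [Finset.mem_image]
    rintro ⟨a, -, ha⟩
    exact hc a ha
  have hsub : insert x (Finset.univ.image (algebraMap F K)) ⊆ g.roots.toFinset := by
    intro z hz
    rw [Multiset.mem_toFinset, mem_roots']
    refine ⟨hg0, ?_⟩
    rcases Finset.mem_insert.mp hz with rfl | hz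
    · simp [hg, IsRoot, hx]
    · obtain ⟨a, -, rfl⟩ := Finset.mem_image.mp hz
      have : (algebraMap F K a) ^ q = algebraMap F K a := by
        rw [← map_pow, FiniteField.pow_card]
      simp [hg, IsRoot, this]
  have hcard : (insert x (Finset.univ.image (algebraMap F K))).card = q + 1 := by
    rw [Finset.card_insert_of_notMem hxmem,
      Finset.card_image_of_injective _ (algebraMap F K).injective, Finset.card_univ]
  have h1 := Finset.card_le_card hsub
  have h2 : g.roots.toFinset.card ≤ q := by
    calc g.roots.toFinset.card ≤ Multiset.card g.roots := Multiset.toFinset_card_le _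
    _ ≤ g.natDegree := g.card_roots'
    _ = q := hgd
  omega

lemma mapMatrix_smul {F K : Type} [Field F] [Field K] [Algebra F K] (c : F)
    (M : Matrix (Fin 2) (Fin 2) F) :
    (algebraMap F K).mapMatrix (c • M) = algebraMap F K c • (algebraMap F K).mapMatrix M := by
  ext i j
  simp [RingHom.mapMatrix_apply, Matrix.map_apply, Matrix.smul_apply, smul_eq_mul, map_mul]

end Aux

/-- The order `D` of `[A]` in `PGL₂(F_q)` according to the type of `A`:
type 1: `D > 1` divides `q-1`; type 2: `D = p`; type 3: `D = 2`; type 4: `D > 2` divides `q+1`. -/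
theorem order_by_type {F : Type} [Field F] [Fintype F] (p : ℕ) (hp : p.Prime) [CharP F p]
    (A : GL (Fin 2) F) (hA : PGLAct.toPGL F A ≠ 1)
    (D : ℕ) (hD : D = orderOf (PGLAct.toPGL F A)) :
    ((∃ x y : F, x ≠ y ∧ Matrix.charpoly A.val = (X - C x) * (X - C y)) →
      1 < D ∧ D ∣ Fintype.card F - 1) ∧
    ((∃ x : F, Matrix.charpoly A.val = (X - C x) ^ 2) → D = p) ∧
    ((Irreducible (Matrix.charpoly A.val) ∧ Matrix.trace A.val = 0) → D = 2) ∧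
    ((Irreducible (Matrix.charpoly A.val) ∧ Matrix.trace A.val ≠ 0) →
      D ∣ Fintype.card F + 1 ∧ 2 < D) := by
  classical
  set B : Matrix (Fin 2) (Fin 2) F := (A : Matrix (Fin 2) (Fin 2) F) with hB
  have hBns : ¬ ∃ c : F, B = c • 1 := fun h => hA ((pgl_eq_one_iff A).mpr h)
  have hdetu : IsUnit B.det := B.isUnit_iff_isUnit_det.mp A.isUnit
  refine ⟨?_, ?_, ?_, ?_⟩
  · -- type 1
    rintro ⟨x, y, hxy, hch⟩
    have hBB : B * B = (x + y) • B - (x * y) • 1 := ch_eq B x y hch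
    have hdet : B.det = x * y := det_of_charpoly B x y hch
    have hxy0 : x * y ≠ 0 := by rw [← hdet]; exact hdetu.ne_zero
    have hx0 : x ≠ 0 := fun h => hxy0 (by rw [h, zero_mul])
    have hy0 : y ≠ 0 := fun h => hxy0 (by rw [h, mul_zero])
    set ζ : F := x * y⁻¹ with hζ
    have hζ0 : ζ ≠ 0 := mul_ne_zero hx0 (inv_ne_zero hy0)
    have hζ1 : ζ ≠ 1 := by
      intro h
      exact hxy ((mul_inv_eq_one₀ hy0).mp h)
    have hiff : ∀ n : ℕ, PGLAct.toPGL F A ^ n = 1 ↔ ζ ^ n = 1 := by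
      intro n
      rw [pgl_pow_eq_one_iff, scalar_pow_iff B x y hBB hxy hBns n,
        hζ, mul_pow, inv_pow, mul_inv_eq_one₀ (pow_ne_zero n hy0)]
    have hDζ : D = orderOf ζ := by
      rw [hD]; exact orderOf_eq_orderOf_iff.mpr hiff
    have hdvd : orderOf ζ ∣ Fintype.card F - 1 :=
      orderOf_dvd_of_pow_eq_one (FiniteField.pow_card_sub_one_eq_one ζ hζ0)
    have hne0 : orderOf ζ ≠ 0 := by
      intro h
      rw [h] at hdvd
      have := Nat.eq_zero_of_zero_dvd hdvd
      have := Fintype.one_lt_card (α := F)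
      omega
    have hne1 : orderOf ζ ≠ 1 := fun h => hζ1 (orderOf_eq_one_iff.mp h)
    rw [hDζ]
    exact ⟨by omega, hdvd⟩
  · -- type 2
    rintro ⟨x, hch⟩
    rw [sq] at hch
    have hBB : B * B = (x + x) • B - (x * x) • 1 := ch_eq B x x hch
    have hdet : B.det = x * x := det_of_charpoly B x x hch
    have hx0 : x ≠ 0 := by
      intro h
      rw [h, mul_zero] at hdet
      exact hdetu.ne_zero hdet
    set N : Matrix (Fin 2) (Fin 2) F := B - x • 1 with hN
    have hN2 : N * N = 0 := by
      rw [hN, expand_two, hBB]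
      module
    have hBeq : B = x • 1 + N := by rw [hN]; module
    have hcomm : Commute (x • (1 : Matrix (Fin 2) (Fin 2) F)) N :=
      (Commute.one_left N).smul_left x
    haveI : Fact p.Prime := ⟨hp⟩
    have hNp : N ^ p = 0 := by
      have hple := hp.two_le
      have h2 : p = 2 + (p - 2) := by omega
      rw [h2, pow_add, pow_two, hN2, zero_mul]
    have hBp : B ^ p = (x ^ p) • 1 := by
      rw [hBeq, add_pow_char_of_commute _ hcomm, hNp, add_zero, _root_.smul_pow, one_pow]
    have h1 : PGLAct.toPGL F A ^ p = 1 := (pgl_pow_eq_one_iff A p).mpr ⟨x ^ p, hBp⟩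
    rw [hD]
    exact orderOf_eq_prime h1 hA
  · -- type 3
    rintro ⟨hirr, htr⟩
    have hdeg : B.charpoly.natDegree = 2 := by
      rw [Matrix.charpoly_natDegree_eq_dim]; simp
    have hf2 := monic_two B.charpoly B.charpoly_monic hdeg
    have hc1 : B.charpoly.coeff 1 = 0 := by
      have h := Matrix.trace_eq_neg_charpoly_coeff B
      simp only [Fintype.card_fin] at h
      norm_num at h
      rw [htr] at h
      exact neg_eq_zero.mp h.symm
    have hch := Matrix.aeval_self_charpoly B
    rw [hf2, hc1] at hch
    simp only [map_add, map_mul, map_pow, aeval_X, aeval_C, map_zero, zero_mul, add_zero,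
      Algebra.algebraMap_eq_smul_one] at hch
    have hB2 : B ^ 2 = (-(B.charpoly.coeff 0)) • 1 := by
      linear_combination (norm := module) hch
    have h1 : PGLAct.toPGL F A ^ 2 = 1 := (pgl_pow_eq_one_iff A 2).mpr ⟨_, hB2⟩
    haveI : Fact (Nat.Prime 2) := ⟨Nat.prime_two⟩
    rw [hD]
    exact orderOf_eq_prime h1 hA
  · -- type 4
    rintro ⟨hirr, htr⟩
    set q := Fintype.card F with hq
    set f := B.charpoly with hf
    have hdeg : f.natDegree = 2 := by
      rw [hf, Matrix.charpoly_natDegree_eq_dim]; simp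
    have hf0 : f ≠ 0 := hirr.ne_zero
    set c1 := f.coeff 1 with hc1def
    set c0 := f.coeff 0 with hc0def
    have hf2 : f = X ^ 2 + C c1 * X + C c0 := monic_two f B.charpoly_monic hdeg
    have hc1tr : c1 = - B.trace := by
      have h := Matrix.trace_eq_neg_charpoly_coeff B
      simp only [Fintype.card_fin] at h
      norm_num at h
      rw [h, neg_neg, hc1def]
    have hc1ne : c1 ≠ 0 := by
      rw [hc1tr]
      exact fun h => htr (neg_eq_zero.mp h)
    have hc0det : B.det = c0 := by
      have h := Matrix.det_eq_sign_charpoly_coeff B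
      simp only [Fintype.card_fin] at h
      norm_num at h
      rw [h, hc0def]
    have hc0ne : c0 ≠ 0 := hc0det ▸ hdetu.ne_zero
    -- the quadratic extension
    haveI : Fact (Irreducible f) := ⟨hirr⟩
    set K := AdjoinRoot f with hK
    set lam : K := AdjoinRoot.root f with hlam
    set φ : F →+* K := algebraMap F K with hφ
    have hroot : lam ^ 2 + φ c1 * lam + φ c0 = 0 := by
      have h := AdjoinRoot.eval₂_root f
      have h2 := congrArg (eval₂ (AdjoinRoot.of f) (AdjoinRoot.root f)) hf2
      rw [h] at h2
      have h3 : AdjoinRoot.root f ^ 2 + AdjoinRoot.of f c1 * AdjoinRoot.root f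
          + AdjoinRoot.of f c0 = 0 := by
        simpa [eval₂_add, eval₂_mul, eval₂_pow, eval₂_X, eval₂_C, AdjoinRoot.algebraMap_eq]
          using h2.symm
      exact h3
    set mu : K := - φ c1 - lam with hmu
    have hsum : lam + mu = - φ c1 := by rw [hmu]; ring
    have hprod : lam * mu = φ c0 := by rw [hmu]; linear_combination -hroot
    -- Cayley-Hamilton over F, then over K
    have hchF := Matrix.aeval_self_charpoly B
    rw [← hf, hf2] at hchF
    simp only [map_add, map_mul, map_pow, aeval_X, aeval_C,
      Algebra.algebraMap_eq_smul_one] at hchF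
    rw [pow_two, smul_mul_assoc, one_mul] at hchF
    have hBBF : B * B = (-c1) • B - c0 • 1 := by
      linear_combination (norm := module) hchF
    set B' : Matrix (Fin 2) (Fin 2) K := φ.mapMatrix B with hB'
    have hBB' : B' * B' = (lam + mu) • B' - (lam * mu) • 1 := by
      have h := congrArg φ.mapMatrix hBBF
      rw [map_mul, map_sub, mapMatrix_smul, mapMatrix_smul, map_one] at h
      rw [hsum, hprod, hB']
      linear_combination (norm := module) h
    -- lam and mu are nonzero
    have hprodne : lam * mu ≠ 0 := by
      rw [hprod]
      simpa using hc0ne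
    have hlam0 : lam ≠ 0 := fun h => hprodne (by rw [h, zero_mul])
    have hmu0 : mu ≠ 0 := fun h => hprodne (by rw [h, mul_zero])
    -- lam is not in the image of F
    have hnr : ∀ a : F, φ a ≠ lam := by
      intro a ha
      have hfa : a ^ 2 + c1 * a + c0 = 0 := by
        have h2 : φ (a ^ 2 + c1 * a + c0) = 0 := by
          rw [map_add, map_add, map_mul, map_pow, ha]
          exact hroot
        exact φ.injective (by simpa using h2)
      have hCC : C (-c1 - a) = - C c1 - C a := by simp
      have hfac : f = (X - C a) * (X - C (-c1 - a)) := by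
        rw [hf2, hCC]
        have hCa : (C a : F[X]) ^ 2 + C c1 * C a + C c0 = 0 := by
          have := congrArg (C : F →+* F[X]) hfa
          simpa using this
        linear_combination hCa
      rcases hirr.isUnit_or_isUnit hfac with h | h
      · exact Polynomial.not_isUnit_X_sub_C a h
      · exact Polynomial.not_isUnit_X_sub_C (-c1 - a) h
    -- Frobenius: lam ^ q is a root, hence equals mu
    obtain ⟨k, hpk, hqk⟩ := FiniteField.card F p
    haveI : CharP K p := charP_of_injective_algebraMap φ.injective p
    haveI : Fact p.Prime := ⟨hp⟩
    have hfix : ∀ c : F, (φ c) ^ q = φ c := by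
      intro c
      rw [← map_pow, FiniteField.pow_card]
    have hr2 : (lam ^ q) ^ 2 + φ c1 * lam ^ q + φ c0 = 0 := by
      have h : (lam ^ 2 + φ c1 * lam + φ c0) ^ p ^ (k : ℕ)
          = 0 ^ p ^ (k : ℕ) := by rw [← hqk, hroot]
      rw [add_pow_char_pow, add_pow_char_pow, mul_pow, zero_pow (pow_ne_zero _ hp.ne_zero)] at h
      rw [← hqk] at h
      rw [hfix c1, hfix c0] at h
      calc (lam ^ q) ^ 2 + φ c1 * lam ^ q + φ c0
          = (lam ^ 2) ^ q + φ c1 * lam ^ q + φ c0 := by ring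
        _ = 0 := h
    have hfrob : (lam ^ q - lam) * (lam ^ q - mu) = 0 := by
      linear_combination hr2 - lam ^ q * hsum + hprod
    have hlq : lam ^ q ≠ lam := by
      intro h
      obtain ⟨a, ha⟩ := mem_range_of_pow_card lam h
      exact hnr a ha
    have hmueq : mu = lam ^ q := by
      rcases mul_eq_zero.mp hfrob with h | h
      · exact absurd (sub_eq_zero.mp h) hlq
      · exact (sub_eq_zero.mp h).symm
    have hneq : lam ≠ mu := fun h => hlq (h ▸ hmueq.symm)
    -- cardinality of K
    haveI : Module.Finite F K := Module.Finite.of_basis (AdjoinRoot.powerBasis hf0).basis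
    haveI : Finite K := Module.finite_of_finite F
    letI : Fintype K := Fintype.ofFinite K
    have hfinrank : Module.finrank F K = 2 := by
      rw [(AdjoinRoot.powerBasis hf0).finrank, AdjoinRoot.powerBasis_dim, hdeg]
    have hcardK : Fintype.card K = q ^ 2 := by
      rw [Module.card_eq_pow_finrank (K := F) (V := K), hfinrank]
    have hlamq2 : lam ^ q ^ 2 = lam := by
      rw [← hcardK]
      exact FiniteField.pow_card lam
    have hmupow : mu ^ (q + 1) = lam ^ (q + 1) := by
      rw [hmueq, ← pow_mul]
      have h1 : q * (q + 1) = q ^ 2 + q := by ring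
      rw [h1, pow_add, hlamq2]
      rw [pow_add, pow_one, mul_comm]
    set ζ : K := lam * mu⁻¹ with hζ
    have hζq1 : ζ ^ (q + 1) = 1 := by
      rw [hζ, mul_pow, inv_pow, hmupow, mul_inv_cancel₀ (pow_ne_zero _ hlam0)]
    -- B' is not scalar
    have hB'ns : ¬ ∃ c : K, B' = c • 1 := by
      rintro ⟨c, hc⟩
      refine hBns ⟨B 0 0, ?_⟩
      have e01 : φ (B 0 1) = 0 := by
        have := congrFun (congrFun hc 0) 1
        simpa [hB', RingHom.mapMatrix_apply, Matrix.map_apply, Matrix.one_apply] using this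
      have e10 : φ (B 1 0) = 0 := by
        have := congrFun (congrFun hc 1) 0
        simpa [hB', RingHom.mapMatrix_apply, Matrix.map_apply, Matrix.one_apply] using this
      have e00 : φ (B 0 0) = c := by
        have := congrFun (congrFun hc 0) 0
        simpa [hB', RingHom.mapMatrix_apply, Matrix.map_apply, Matrix.one_apply] using this
      have e11 : φ (B 1 1) = c := by
        have := congrFun (congrFun hc 1) 1
        simpa [hB', RingHom.mapMatrix_apply, Matrix.map_apply, Matrix.one_apply] using this
      have h01 : B 0 1 = 0 := φ.injective (by simpa using e01)
      have h10 : B 1 0 = 0 := φ.injective (by simpa using e10)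
      have h0011 : B 1 1 = B 0 0 := φ.injective (by rw [e00, e11])
      ext i j
      fin_cases i <;> fin_cases j <;>
        simp [Matrix.one_apply, h01, h10, h0011]
    -- the order characterization
    have hiff : ∀ n : ℕ, PGLAct.toPGL F A ^ n = 1 ↔ ζ ^ n = 1 := by
      intro n
      rw [pgl_pow_eq_one_iff]
      have hmid : (∃ c : K, B' ^ n = c • 1) ↔ lam ^ n = mu ^ n :=
        scalar_pow_iff B' lam mu hBB' hneq hB'ns n
      have hz : lam ^ n = mu ^ n ↔ ζ ^ n = 1 := by
        rw [hζ, mul_pow, inv_pow, mul_inv_eq_one₀ (pow_ne_zero n hmu0)]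
      rw [← hz, ← hmid]
      constructor
      · rintro ⟨c, hc⟩
        refine ⟨φ c, ?_⟩
        rw [hB', ← map_pow, hc, mapMatrix_smul, map_one]
      · rintro ⟨c, hc⟩
        rw [hB', ← map_pow] at hc
        refine ⟨(B ^ n) 0 0, ?_⟩
        have e01 : φ ((B ^ n) 0 1) = 0 := by
          have := congrFun (congrFun hc 0) 1
          simpa [RingHom.mapMatrix_apply, Matrix.map_apply, Matrix.one_apply] using this
        have e10 : φ ((B ^ n) 1 0) = 0 := by
          have := congrFun (congrFun hc 1) 0
          simpa [RingHom.mapMatrix_apply, Matrix.map_apply, Matrix.one_apply] using this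
        have e00 : φ ((B ^ n) 0 0) = c := by
          have := congrFun (congrFun hc 0) 0
          simpa [RingHom.mapMatrix_apply, Matrix.map_apply, Matrix.one_apply] using this
        have e11 : φ ((B ^ n) 1 1) = c := by
          have := congrFun (congrFun hc 1) 1
          simpa [RingHom.mapMatrix_apply, Matrix.map_apply, Matrix.one_apply] using this
        have h01 : (B ^ n) 0 1 = 0 := φ.injective (by simpa using e01)
        have h10 : (B ^ n) 1 0 = 0 := φ.injective (by simpa using e10)
        have h0011 : (B ^ n) 1 1 = (B ^ n) 0 0 := φ.injective (by rw [e00, e11])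
        ext i j
        fin_cases i <;> fin_cases j <;>
          simp [Matrix.one_apply, h01, h10, h0011, ← hB]
    have hDζ : D = orderOf ζ := by
      rw [hD]; exact orderOf_eq_orderOf_iff.mpr hiff
    have hdvd : orderOf ζ ∣ q + 1 := orderOf_dvd_of_pow_eq_one hζq1
    have hζ1 : ζ ≠ 1 := by
      intro h
      rw [hζ, mul_inv_eq_one₀ hmu0] at h
      exact hneq h
    have hne0 : orderOf ζ ≠ 0 := by
      intro h
      rw [h] at hdvd
      have := Nat.eq_zero_of_zero_dvd hdvd
      omega
    have hne1 : orderOf ζ ≠ 1 := fun h => hζ1 (orderOf_eq_one_iff.mp h)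
    have hne2 : orderOf ζ ≠ 2 := by
      intro h
      have h2 : ζ ^ 2 = 1 := by
        rw [← h]
        exact pow_orderOf_eq_one ζ
      rw [hζ, mul_pow, inv_pow, mul_inv_eq_one₀ (pow_ne_zero 2 hmu0)] at h2
      have hsq : (lam - mu) * (lam + mu) = 0 := by linear_combination h2
      rcases mul_eq_zero.mp hsq with h3 | h3
      · exact hneq (sub_eq_zero.mp h3)
      · rw [hsum] at h3
        have : φ c1 = 0 := by rwa [neg_eq_zero] at h3
        exact hc1ne (φ.injective (by simpa using this))
    rw [hDζ]
    exact ⟨hdvd, by omega⟩
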